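/- Let (M^n, g, f), n ≥ 5, be a weakly Einstein Miao-Tam critical metric such that the Weyl tensor satisfies W|_{T∂M} = 0. Then on the boundary ∂M, with e₁ = -∇f/|∇f|, the identity (2R/(n-1)) R̊₁₁ = -((n²-6n+6)/(n-1)) |W^ν|² - ((n-4)/(n-2)) |R̊ic|² holds, where W^ν_ij = W_{i1j1}. -/

import Mathlib

set_option maxHeartbeats 2000000 in
/-- for a weakly Einstein Miao-Tam critical metric of
dimension `n ≥ 5` whose Weyl tensor vanishes on directions tangent to the
boundary (`W_abcd = 0` for frame indices `a,b,c,d ≠ o` tangent to `∂M`), the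
following identity holds on `∂M`, in an orthonormal frame with
`e₁ = -∇f/|∇f|` (index `o`):
`(2R/(n-1)) R̊₁₁ = -((n²-6n+6)/(n-1))|Wᵛ|² - ((n-4)/(n-2))|R̊ic|²`,
where `Wᵛ_ij = W_{i1j1}`. Data as in the boundary identity: `Rm` is the
Riemann tensor, `Ric` its Ricci contraction with `∇f` as eigenvector, `R` the
scalar curvature, `W` the Weyl tensor, `E = R̊ic`, the weakly Einstein
condition holds, `T` is the auxiliary tensor and `T_ijk = -W_ijkl ∇_l f`
since `f = 0` on `∂M`. -/
theorem weakly_einstein_boundary_identity_weyl_tangent_flat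
    (n : ℕ) (hn : 5 ≤ n)
    (o : Fin n)  -- the frame index of `e₁`
    (Rm W : Fin n → Fin n → Fin n → Fin n → ℝ)
    (Ric E : Fin n → Fin n → ℝ) (R : ℝ) (df : Fin n → ℝ) (c : ℝ)
    (T : Fin n → Fin n → Fin n → ℝ)
    (kd : Fin n → Fin n → ℝ)
    (hkd : ∀ i j, kd i j = if i = j then 1 else 0)
    (hRm1 : ∀ i j k l, Rm i j k l = - Rm j i k l)
    (hRm2 : ∀ i j k l, Rm i j k l = - Rm i j l k)
    (hRm3 : ∀ i j k l, Rm i j k l = Rm k l i j)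
    (hRm4 : ∀ i j k l, Rm i j k l + Rm i k l j + Rm i l j k = 0)
    (hRic : ∀ i j, Ric i j = ∑ p : Fin n, Rm i p j p)
    (hR : R = ∑ i : Fin n, Ric i i)
    (hW : ∀ i j k l, Rm i j k l = W i j k l
        + (1 / ((n : ℝ) - 2)) * (Ric i k * kd j l + Ric j l * kd i k
            - Ric i l * kd j k - Ric j k * kd i l)
        - (R / (((n : ℝ) - 1) * ((n : ℝ) - 2))) * (kd j l * kd i k - kd i l * kd j k))
    (hE : ∀ i j, E i j = Ric i j - (R / (n : ℝ)) * kd i j)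
    (hWE : ∀ i j, (∑ p : Fin n, ∑ q : Fin n, ∑ r : Fin n, Rm i p q r * Rm j p q r)
        = ((∑ a : Fin n, ∑ b : Fin n, ∑ c' : Fin n, ∑ d : Fin n,
            (Rm a b c' d) ^ 2) / (n : ℝ)) * kd i j)
    (hc : 0 < c)
    (hdf0 : df o = -c)
    (hdfa : ∀ a : Fin n, a ≠ o → df a = 0)
    (heig : ∀ a : Fin n, a ≠ o → Ric o a = 0)
    (hT : ∀ i j k, T i j k
        = (((n : ℝ) - 1) / ((n : ℝ) - 2)) * (Ric i k * df j - Ric j k * df i)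
          - (R / ((n : ℝ) - 2)) * (kd i k * df j - kd j k * df i)
          + (1 / ((n : ℝ) - 2)) * (kd i k * (∑ s : Fin n, Ric j s * df s)
              - kd j k * (∑ s : Fin n, Ric i s * df s)))
    (hTW : ∀ i j k, T i j k = - ∑ l : Fin n, W i j k l * df l)
    (hWtangent : ∀ a b c' d : Fin n,
        a ≠ o → b ≠ o → c' ≠ o → d ≠ o → W a b c' d = 0) :
    (2 * R / ((n : ℝ) - 1)) * E o o
      = -(((n : ℝ) ^ 2 - 6 * (n : ℝ) + 6) / ((n : ℝ) - 1))
            * (∑ i : Fin n, ∑ j : Fin n, (W i o j o) ^ 2)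
        - (((n : ℝ) - 4) / ((n : ℝ) - 2))
            * (∑ i : Fin n, ∑ j : Fin n, (E i j) ^ 2) := by
  have h5 : (5:ℝ) ≤ (n:ℝ) := by exact_mod_cast hn
  have hn1 : ((n:ℝ) - 1) ≠ 0 := by nlinarith
  have hn2 : ((n:ℝ) - 2) ≠ 0 := by nlinarith
  have hnn : (n:ℝ) ≠ 0 := by nlinarith
  have hc0 : c ≠ 0 := ne_of_gt hc
  have hksymm : ∀ i j, kd i j = kd j i := by intro i j; simp [hkd, eq_comm]
  have hkoo : kd o o = 1 := by simp [hkd]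
  have hRicsymm : ∀ i j, Ric i j = Ric j i := by
    intro i j; rw [hRic, hRic]; exact Finset.sum_congr rfl fun p _ => hRm3 i p j p
  have hRicao : ∀ a : Fin n, a ≠ o → Ric a o = 0 := fun a ha =>
    (hRicsymm a o).trans (heig a ha)
  have hWa1 : ∀ i j k l, W j i k l = - W i j k l := by
    intro i j k l; linear_combination hRm1 i j k l - hW i j k l - hW j i k l
  have hWa2 : ∀ i j k l, W i j l k = - W i j k l := by
    intro i j k l; linear_combination hRm2 i j k l - hW i j k l - hW i j l k
  have hWsw : ∀ i j k l, W k l i j = W i j k l := by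
    intro i j k l
    have h2 := hW k l i j
    rw [hRicsymm k i, hRicsymm l j, hRicsymm k j, hRicsymm l i,
        hksymm l j, hksymm k i, hksymm l i, hksymm k j] at h2
    linear_combination hW i j k l - h2 - hRm3 i j k l
  -- trace-freeness of W
  have htrW : ∀ b c', (∑ p : Fin n, W b p c' p) = 0 := by
    intro b c'
    have h1 : ∀ p, W b p c' p = Rm b p c' p
        - (1 / ((n : ℝ) - 2)) * (Ric b c' * kd p p + Ric p p * kd b c'
            - Ric b p * kd p c' - Ric p c' * kd b p)
        + (R / (((n : ℝ) - 1) * ((n : ℝ) - 2))) * (kd p p * kd b c' - kd b p * kd p c') :=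
      fun p => by linear_combination - hW b p c' p
    rw [Finset.sum_congr rfl (fun p _ => h1 p)]
    have e1 : (∑ p : Fin n, Rm b p c' p) = Ric b c' := (hRic b c').symm
    have e2 : (∑ p : Fin n, Ric p p) = R := hR.symm
    have e3 : (∑ p : Fin n, Ric b p * kd p c') = Ric b c' := by
      simp [hkd, mul_ite, Finset.sum_ite_eq]
    have e4 : (∑ p : Fin n, Ric p c' * kd b p) = Ric b c' := by
      simp [hkd, mul_ite, Finset.sum_ite_eq]
    have e5 : (∑ p : Fin n, kd b p * kd p c') = kd b c' := by
      simp [hkd, mul_ite, ite_mul, Finset.sum_ite_eq]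
    have e6 : (∑ p : Fin n, kd p p) = (n:ℝ) := by simp [hkd]
    have hsplit : (∑ p : Fin n, (Rm b p c' p
        - (1 / ((n : ℝ) - 2)) * (Ric b c' * kd p p + Ric p p * kd b c'
            - Ric b p * kd p c' - Ric p c' * kd b p)
        + (R / (((n : ℝ) - 1) * ((n : ℝ) - 2))) * (kd p p * kd b c' - kd b p * kd p c')))
        = Ric b c' - (1 / ((n : ℝ) - 2)) * (Ric b c' * (n:ℝ) + R * kd b c'
            - Ric b c' - Ric b c')
          + (R / (((n : ℝ) - 1) * ((n : ℝ) - 2))) * ((n:ℝ) * kd b c' - kd b c') := by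
      rw [Finset.sum_add_distrib, Finset.sum_sub_distrib, ← Finset.mul_sum, ← Finset.mul_sum,
          Finset.sum_sub_distrib, Finset.sum_sub_distrib, Finset.sum_add_distrib,
          Finset.sum_sub_distrib, ← Finset.sum_mul, e1, e2, e3, e4, e5,
          ← Finset.mul_sum, ← Finset.sum_mul, e6]
    rw [hsplit]
    field_simp
    ring
  -- sum against df
  have hsum_df : ∀ v : Fin n → ℝ, (∑ s : Fin n, v s * df s) = v o * (-c) := by
    intro v
    rw [← Finset.add_sum_erase _ _ (Finset.mem_univ o), hdf0,
        Finset.sum_eq_zero (fun l hl => by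
          rw [hdfa l (Finset.mem_erase.mp hl).1, mul_zero]), add_zero]
  -- W with last index o, others tangential
  have hWT3 : ∀ a b c', a ≠ o → b ≠ o → c' ≠ o → W a b c' o = 0 := by
    intro a b c' ha hb hcc
    have h2 := hTW a b c'
    rw [hsum_df (fun l => W a b c' l)] at h2
    have h3 := hT a b c'
    rw [hdfa a ha, hdfa b hb, hsum_df (fun s => Ric b s), hsum_df (fun s => Ric a s),
        hRicao a ha, hRicao b hb] at h3
    have h4 : c * W a b c' o = 0 := by rw [h3] at h2; linarith [h2]
    rcases mul_eq_zero.mp h4 with h | h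
    · exact absurd h hc0
    · exact h
  -- the "Wν" components vanish
  have hWo : ∀ b c', b ≠ o → c' ≠ o → W b o c' o = 0 := by
    intro b c' hb hcc
    have h1 := htrW b c'
    rw [← Finset.add_sum_erase _ _ (Finset.mem_univ o),
        Finset.sum_eq_zero (fun p hp =>
          hWtangent b p c' p hb (Finset.mem_erase.mp hp).1 hcc (Finset.mem_erase.mp hp).1),
        add_zero] at h1
    exact h1
  -- W vanishes completely
  have hdiag1 : ∀ k l, W o o k l = 0 := by
    intro k l; have := hWa1 o o k l; linarith
  have hdiag2 : ∀ i j, W i j o o = 0 := by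
    intro i j; have := hWa2 i j o o; linarith
  have hfirst : ∀ b k l, W o b k l = 0 := by
    intro b k l
    rcases eq_or_ne b o with hb | hb
    · rw [hb]; exact hdiag1 k l
    rcases eq_or_ne k o with hk | hk
    · rcases eq_or_ne l o with hl | hl
      · rw [hk, hl]; exact hdiag2 o b
      · rw [hk]
        have e1 : W o b o l = - W b o o l := hWa1 b o o l
        have e2 : W b o l o = - W b o o l := hWa2 b o o l
        rw [e1, ← e2, hWo b l hb hl]
    · rcases eq_or_ne l o with hl | hl
      · rw [hl, hWa1 b o k o, hWo b k hb hk]; ring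
      · rw [← hWsw o b k l]
        have h2 := hWa2 k l o b
        rw [hWT3 k l b hk hl hb] at h2
        linarith
  have hW0 : ∀ i j k l, W i j k l = 0 := by
    intro i j k l
    rcases eq_or_ne i o with hi | hi
    · rw [hi]; exact hfirst j k l
    rcases eq_or_ne j o with hj | hj
    · rw [hj, hWa1 o i k l, hfirst i k l]; ring
    rcases eq_or_ne k o with hk | hk
    · rcases eq_or_ne l o with hl | hl
      · rw [hk, hl]; exact hdiag2 i j
      · rw [hk, hWa2 i j l o, hWT3 i j l hi hj hl]; ring
    rcases eq_or_ne l o with hl | hl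
    · rw [hl]; exact hWT3 i j k hi hj hk
    · exact hWtangent i j k l hi hj hk hl
  -- Ricci structure
  obtain ⟨L, hLdef⟩ : ∃ x : ℝ, x = (R - Ric o o) / ((n:ℝ) - 1) := ⟨_, rfl⟩
  obtain ⟨m, hmdef⟩ : ∃ x : ℝ, x = Ric o o - L := ⟨_, rfl⟩
  have hRictan : ∀ b c', b ≠ o → c' ≠ o → Ric b c' = L * kd b c' := by
    intro b c' hb hcc
    have h2 := hTW o b c'
    rw [hsum_df (fun l => W o b c' l)] at h2
    simp only [hfirst b c' o, zero_mul, neg_zero] at h2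
    have h3 := hT o b c'
    rw [hdfa b hb, hdf0, hsum_df (fun s => Ric b s), hsum_df (fun s => Ric o s),
        hRicao b hb, heig c' hcc] at h3
    have hkoc : kd o c' = 0 := by simp [hkd]; exact fun h => hcc h.symm
    rw [hkoc] at h3
    rw [h2] at h3
    rw [hLdef]
    field_simp at h3 ⊢
    nlinarith [h3, sq_nonneg c]
  have hRicAll : ∀ i j, Ric i j = L * kd i j + m * (kd i o * kd j o) := by
    intro i j
    rcases eq_or_ne i o with hi | hi
    · rcases eq_or_ne j o with hj | hj
      · rw [hi, hj, hkoo, hmdef]; ring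
      · rw [hi, heig j hj]
        have h1 : kd o j = 0 := by simp [hkd]; exact fun h => hj h.symm
        have h2 : kd j o = 0 := by simp [hkd, hj]
        rw [h1, h2]; ring
    · rcases eq_or_ne j o with hj | hj
      · rw [hj, hRicao i hi]
        have h1 : kd i o = 0 := by simp [hkd, hi]
        rw [h1]; ring
      · rw [hRictan i j hi hj]
        have h1 : kd i o = 0 := by simp [hkd, hi]
        rw [h1]; ring
  have hRval : R = (n:ℝ) * L + m := by
    rw [hmdef, hLdef]; field_simp; ring
  -- Riemann tensor structure
  obtain ⟨B, hBdef⟩ : ∃ x : ℝ, x = 2*L/((n:ℝ)-2) - R/(((n:ℝ)-1)*((n:ℝ)-2)) := ⟨_, rfl⟩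
  obtain ⟨Q, hQdef⟩ : ∃ x : ℝ, x = m/((n:ℝ)-2) := ⟨_, rfl⟩
  have hRmAll : ∀ i j k l, Rm i j k l
      = B * (kd i k * kd j l - kd i l * kd j k)
        + Q * (kd i o * kd k o * kd j l + kd j o * kd l o * kd i k
            - kd i o * kd l o * kd j k - kd j o * kd k o * kd i l) := by
    intro i j k l
    rw [hW i j k l, hW0 i j k l, hRicAll i k, hRicAll j l, hRicAll i l, hRicAll j k,
        hBdef, hQdef]
    field_simp
    ring
  have hRmo : ∀ p q r, Rm o p q r = (B + Q) * (kd q o * kd p r - kd r o * kd p q) := by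
    intro p q r
    rw [hRmAll o p q r, hksymm o q, hksymm o r, hkoo]
    ring
  obtain ⟨a, ha⟩ := Fintype.exists_ne_of_one_lt_card (α := Fin n) (by simp; omega) o
  have hao : ¬ (a = o) := ha
  have hkao : kd a o = 0 := by simp [hkd, ha]
  have hkaa : kd a a = 1 := by simp [hkd]
  have hRma : ∀ p q r, Rm a p q r
      = B * (kd a q * kd p r - kd a r * kd p q)
        + Q * (kd p o * kd r o * kd a q - kd p o * kd q o * kd a r) := by
    intro p q r
    rw [hRmAll a p q r, hkao]
    ring
  have So : (∑ p : Fin n, ∑ q : Fin n, ∑ r : Fin n, Rm o p q r * Rm o p q r)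
      = (2*(n:ℝ) - 2) * (B + Q)^2 := by
    have h1 : ∀ p q r : Fin n, Rm o p q r * Rm o p q r
        = ((B + Q) * (kd q o * kd p r - kd r o * kd p q))^2 := by
      intro p q r; rw [hRmo p q r]; ring
    simp only [h1, hkd, sub_sq, mul_pow, ite_pow, one_pow, zero_pow, mul_ite, ite_mul,
      one_mul, mul_one, zero_mul, mul_zero, sub_mul, mul_sub, add_mul, mul_add]
    repeat simp [Finset.sum_ite_eq', Finset.sum_ite_eq, Finset.sum_sub_distrib,
      Finset.sum_add_distrib, Finset.mul_sum, mul_ite, ite_mul]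
    ring
  have Sa : (∑ p : Fin n, ∑ q : Fin n, ∑ r : Fin n, Rm a p q r * Rm a p q r)
      = (2*(n:ℝ) - 2)*B^2 + 4*B*Q + 2*Q^2 := by
    have h1 : ∀ p q r : Fin n, Rm a p q r * Rm a p q r
        = (B * (kd a q * kd p r - kd a r * kd p q)
            + Q * (kd p o * kd r o * kd a q - kd p o * kd q o * kd a r))^2 := by
      intro p q r; rw [hRma p q r]; ring
    simp only [h1, hkd, add_sq, sub_sq, mul_pow, ite_pow, one_pow, zero_pow, mul_ite, ite_mul,
      one_mul, mul_one, zero_mul, mul_zero, sub_mul, mul_sub, add_mul, mul_add]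
    repeat simp [Finset.sum_ite_eq', Finset.sum_ite_eq, Finset.sum_sub_distrib,
      Finset.sum_add_distrib, Finset.mul_sum, mul_ite, ite_mul, hao]
    ring
  have hkey : (2*(n:ℝ)-2) * (B+Q)^2 = (2*(n:ℝ)-2)*B^2 + 4*B*Q + 2*Q^2 := by
    have h1 := hWE o o
    have h2 := hWE a a
    rw [hkoo, mul_one, So] at h1
    rw [hkaa, mul_one, Sa] at h2
    exact h1.trans h2.symm
  have key2 : Q * (2*B + Q) = 0 := by
    have h : (2*(n:ℝ) - 4) * (Q * (2*B+Q)) = 0 := by linear_combination hkey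
    rcases mul_eq_zero.mp h with h | h
    · exfalso; nlinarith
    · exact h
  have key3 : m * ((2*(n:ℝ)-4)*L + ((n:ℝ)-3)*m) = 0 := by
    have h := key2
    rw [hBdef, hQdef, hRval] at h
    field_simp at h
    have h2 : (((n:ℝ)-2)^2) * (m * ((2*(n:ℝ)-4)*L + ((n:ℝ)-3)*m)) = 0 := by
      linear_combination ((n:ℝ)-2)^2 * h
    rcases mul_eq_zero.mp h2 with h3 | h3
    · exact absurd h3 (pow_ne_zero 2 hn2)
    · exact h3
  have SW0 : (∑ i : Fin n, ∑ j : Fin n, (W i o j o)^2) = 0 := by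
    simp [hW0]
  have hEval : ∀ i j, E i j = m * (kd i o * kd j o) - (m/(n:ℝ)) * kd i j := by
    intro i j
    rw [hE i j, hRicAll i j, hRval]
    field_simp
    ring
  have SE : (∑ i : Fin n, ∑ j : Fin n, (E i j)^2) = m^2 - m^2/(n:ℝ) := by
    have h1 : ∀ i j : Fin n, (E i j)^2
        = (m * (kd i o * kd j o) - (m/(n:ℝ)) * kd i j)^2 := by
      intro i j; rw [hEval i j]
    simp only [h1, hkd, sub_sq, mul_pow, ite_pow, one_pow, zero_pow, mul_ite, ite_mul,
      one_mul, mul_one, zero_mul, mul_zero, sub_mul, mul_sub, add_mul, mul_add]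
    repeat simp [Finset.sum_ite_eq', Finset.sum_ite_eq, Finset.sum_sub_distrib,
      Finset.sum_add_distrib, Finset.mul_sum, mul_ite, ite_mul]
    field_simp
    ring
  have hEoo : E o o = m - m/(n:ℝ) := by
    rw [hEval o o, hkoo]; ring
  rw [SW0, SE, hEoo, hRval]
  field_simp
  linear_combination ((n:ℝ)^2 - (n:ℝ)) * key3
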